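/- Let s ≥ 1, n ≥ 4s−1, γ ∈ ℝ. Let g⁺ ∈ ℂ^s have all entries nonzero, let θ⁺ ∈ 𝕋^s have pairwise distinct entries with (θ⁺_k)^n ≠ e^{−iγ} for all k, and let z_0,…,z_{4s−2} ∈ 𝕋 be pairwise distinct with z_j^n = e^{iγ} for all j. (Then L̂⁺(z_j) ≠ 0 for all j, so y_j = |u⁺(z_j)/v⁺(z_j)|² is well defined.) Suppose L̂ and M are Hermitian Laurent polynomials with coefficients supported in degrees −s,…,s and −(s−1),…,s−1 respectively, satisfying y_j·L̂(z_j) − M(z_j) = 0 for all 0 ≤ j ≤ 4s−2. Then there exists a real scalar c such that L̂ = c·L̂⁺ and M = c·M⁺ identically, where M⁺ = L⁺ + e^{iγ}·L̃⁺ + e^{−iγ}·(L̃⁺)*. -/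

import Mathlib

open Polynomial Finset Complex

/-- `t_l(z) = ∏_{i ≠ l} (z·θ_i − 1)`. -/
noncomputable def tPoly (s : ℕ) (θ : Fin s → ℂ) (l : Fin s) : Polynomial ℂ :=
  ∏ i ∈ Finset.univ.erase l, (Polynomial.C (θ i) * Polynomial.X - 1)

/-- `û(z) = Σ_l g_l · θ_l^n · t_l(z)`. -/
noncomputable def uHat (s n : ℕ) (θ g : Fin s → ℂ) : Polynomial ℂ :=
  ∑ l : Fin s, Polynomial.C (g l * θ l ^ n) * tPoly s θ l

/-- `ũ(z) = −Σ_l g_l · t_l(z)`. -/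
noncomputable def uTilde (s : ℕ) (θ g : Fin s → ℂ) : Polynomial ℂ :=
  -∑ l : Fin s, Polynomial.C (g l) * tPoly s θ l

/-- `v(z) = ∏_l (z·θ_l − 1)`. -/
noncomputable def vPoly (s : ℕ) (θ : Fin s → ℂ) : Polynomial ℂ :=
  ∏ l : Fin s, (Polynomial.C (θ l) * Polynomial.X - 1)

/-- `u(z) = z^n·û(z) + ũ(z)`. -/
noncomputable def uPoly (s n : ℕ) (θ g : Fin s → ℂ) : Polynomial ℂ :=
  Polynomial.X ^ n * uHat s n θ g + uTilde s θ g

/-- Evaluation of a Laurent polynomial with coefficient function `c` supported in degrees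
`−d, …, d` at the point `z`. -/
noncomputable def lEval (d : ℕ) (c : ℤ → ℂ) (z : ℂ) : ℂ :=
  ∑ k ∈ Finset.Icc (-(d : ℤ)) (d : ℤ), c k * z ^ k

/-! ### Auxiliary machinery -/

/-- conjugate-reflect of a polynomial at degree `d`. -/
noncomputable def flipC (d : ℕ) (P : Polynomial ℂ) : Polynomial ℂ :=
  ∑ j ∈ Finset.range (d + 1),
    Polynomial.C ((starRingEnd ℂ) (P.coeff (d - j))) * Polynomial.X ^ j

lemma flipC_natDegree_le (d : ℕ) (P : Polynomial ℂ) : (flipC d P).natDegree ≤ d := by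
  refine Polynomial.natDegree_sum_le_of_forall_le _ _ fun j hj => ?_
  refine (Polynomial.natDegree_C_mul_le _ _).trans ?_
  rw [Polynomial.natDegree_X_pow]
  exact Nat.lt_succ_iff.mp (Finset.mem_range.mp hj)

lemma conj_of_abs_one {z : ℂ} (hz : ‖z‖ = 1) : (starRingEnd ℂ) z = z⁻¹ :=
  (Complex.inv_eq_conj hz).symm

lemma ne_zero_of_abs_one {z : ℂ} (hz : ‖z‖ = 1) : z ≠ 0 := by
  intro h; rw [h] at hz; simp at hz

lemma mul_conj_of_abs_one {z : ℂ} (hz : ‖z‖ = 1) : z * (starRingEnd ℂ) z = 1 := by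
  rw [Complex.mul_conj, Complex.normSq_eq_norm_sq, hz]; norm_num

lemma flipC_eval {d : ℕ} {P : Polynomial ℂ} (hP : P.natDegree ≤ d) {z : ℂ}
    (hz : ‖z‖ = 1) :
    (flipC d P).eval z = z ^ d * (starRingEnd ℂ) (P.eval z) := by
  have hz0 : z ≠ 0 := ne_zero_of_abs_one hz
  have hzc : (starRingEnd ℂ) z = z⁻¹ := conj_of_abs_one hz
  have hev : P.eval z = ∑ j ∈ Finset.range (d + 1), P.coeff j * z ^ j :=
    Polynomial.eval_eq_sum_range' (lt_of_le_of_lt hP (Nat.lt_succ_self d)) z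
  rw [flipC, Polynomial.eval_finset_sum]
  simp only [Polynomial.eval_mul, Polynomial.eval_C, Polynomial.eval_pow, Polynomial.eval_X]
  rw [hev, map_sum, Finset.mul_sum]
  rw [← Finset.sum_range_reflect (fun j => z ^ d * (starRingEnd ℂ) (P.coeff j * z ^ j)) (d + 1)]
  refine Finset.sum_congr rfl fun j hj => ?_
  have hjd : j ≤ d := Nat.lt_succ_iff.mp (Finset.mem_range.mp hj)
  have h1 : d + 1 - 1 - j = d - j := by omega
  rw [h1, map_mul, map_pow, hzc, inv_pow]
  have h2 : z ^ d = z ^ j * z ^ (d - j) := by rw [← pow_add]; congr 1; omega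
  have h3 : (z : ℂ) ^ (d - j) ≠ 0 := pow_ne_zero _ hz0
  field_simp [h2]
  rw [h2]; ring

lemma natDegree_tPoly_le (s : ℕ) (θ : Fin s → ℂ) (l : Fin s) :
    (tPoly s θ l).natDegree ≤ s - 1 := by
  refine (Polynomial.natDegree_prod_le _ _).trans ?_
  have h1 : ∀ i ∈ Finset.univ.erase l,
      ((Polynomial.C (θ i) * Polynomial.X - 1 : Polynomial ℂ)).natDegree ≤ 1 := by
    intro i _
    refine (Polynomial.natDegree_sub_le _ _).trans ?_
    simp only [Polynomial.natDegree_one, max_le_iff, Nat.zero_le, and_true]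
    exact (Polynomial.natDegree_C_mul_le _ _).trans (by simp)
  refine (Finset.sum_le_sum h1).trans ?_
  simp [Finset.card_erase_of_mem]

lemma natDegree_uHat_le (s n : ℕ) (θ g : Fin s → ℂ) : (uHat s n θ g).natDegree ≤ s - 1 := by
  refine Polynomial.natDegree_sum_le_of_forall_le _ _ fun l _ => ?_
  exact (Polynomial.natDegree_C_mul_le _ _).trans (natDegree_tPoly_le s θ l)

lemma natDegree_uTilde_le (s : ℕ) (θ g : Fin s → ℂ) : (uTilde s θ g).natDegree ≤ s - 1 := by
  rw [uTilde, Polynomial.natDegree_neg]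
  refine Polynomial.natDegree_sum_le_of_forall_le _ _ fun l _ => ?_
  exact (Polynomial.natDegree_C_mul_le _ _).trans (natDegree_tPoly_le s θ l)

lemma natDegree_vPoly_le (s : ℕ) (θ : Fin s → ℂ) : (vPoly s θ).natDegree ≤ s := by
  refine (Polynomial.natDegree_prod_le _ _).trans ?_
  have h1 : ∀ l ∈ Finset.univ,
      ((Polynomial.C (θ l) * Polynomial.X - 1 : Polynomial ℂ)).natDegree ≤ 1 := by
    intro i _
    refine (Polynomial.natDegree_sub_le _ _).trans ?_
    simp only [Polynomial.natDegree_one, max_le_iff, Nat.zero_le, and_true]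
    exact (Polynomial.natDegree_C_mul_le _ _).trans (by simp)
  refine (Finset.sum_le_sum h1).trans (by simp)

lemma vPoly_eq (s : ℕ) (θ : Fin s → ℂ) (hθ : ∀ l, ‖θ l‖ = 1) :
    vPoly s θ = Polynomial.C (∏ l, θ l) *
      ∏ l, (Polynomial.X - Polynomial.C ((starRingEnd ℂ) (θ l))) := by
  rw [vPoly, map_prod, ← Finset.prod_mul_distrib]
  refine Finset.prod_congr rfl fun l _ => ?_
  rw [mul_sub, ← Polynomial.C_mul, mul_conj_of_abs_one (hθ l), map_one, mul_comm
    (Polynomial.C (θ l)) Polynomial.X]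

lemma eq_C_mul_of_dvd {P Q : Polynomial ℂ} (hQ : Q.Monic) (h : Q ∣ P)
    (hdeg : P.natDegree ≤ Q.natDegree) : ∃ r : ℂ, P = Polynomial.C r * Q := by
  obtain ⟨R, rfl⟩ := h
  rcases eq_or_ne R 0 with rfl | hR
  · exact ⟨0, by simp⟩
  · rw [Polynomial.natDegree_mul hQ.ne_zero hR] at hdeg
    have h0 : R.natDegree = 0 := by omega
    obtain ⟨r, hr⟩ := Polynomial.natDegree_eq_zero.mp h0
    exact ⟨r, by rw [← hr]; ring⟩

noncomputable def lpoly (s : ℕ) (c : ℤ → ℂ) : Polynomial ℂ :=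
  ∑ j ∈ Finset.range (2 * s + 1), Polynomial.C (c ((j : ℤ) - s)) * Polynomial.X ^ j

noncomputable def mpoly (s : ℕ) (c : ℤ → ℂ) : Polynomial ℂ :=
  ∑ j ∈ Finset.range (2 * s - 1), Polynomial.C (c ((j : ℤ) + 1 - s)) * Polynomial.X ^ j

lemma natDegree_lpoly_le (s : ℕ) (c : ℤ → ℂ) : (lpoly s c).natDegree ≤ 2 * s := by
  refine Polynomial.natDegree_sum_le_of_forall_le _ _ fun j hj => ?_
  refine (Polynomial.natDegree_C_mul_le _ _).trans ?_
  rw [Polynomial.natDegree_X_pow]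
  exact Nat.lt_succ_iff.mp (Finset.mem_range.mp hj)

lemma natDegree_mpoly_le (s : ℕ) (c : ℤ → ℂ) : (mpoly s c).natDegree ≤ 2 * s - 2 := by
  refine Polynomial.natDegree_sum_le_of_forall_le _ _ fun j hj => ?_
  refine (Polynomial.natDegree_C_mul_le _ _).trans ?_
  rw [Polynomial.natDegree_X_pow]
  have := Finset.mem_range.mp hj
  omega

lemma lpoly_eval (s : ℕ) (c : ℤ → ℂ) {z : ℂ} (hz : z ≠ 0) :
    (lpoly s c).eval z = z ^ s * lEval s c z := by
  rw [lpoly, Polynomial.eval_finset_sum]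
  simp only [Polynomial.eval_mul, Polynomial.eval_C, Polynomial.eval_pow, Polynomial.eval_X]
  rw [lEval, Finset.mul_sum]
  refine Finset.sum_nbij' (fun j => (j : ℤ) - s) (fun k => (k + s).toNat) ?_ ?_ ?_ ?_ ?_
  · intro j hj
    have := Finset.mem_range.mp hj
    simp only [Finset.mem_Icc]; omega
  · intro k hk
    simp only [Finset.mem_Icc] at hk
    simp only [Finset.mem_range]; omega
  · intro j hj; have := Finset.mem_range.mp hj; omega
  · intro k hk; simp only [Finset.mem_Icc] at hk; omega
  · intro j hj
    rw [← zpow_natCast z s, ← zpow_natCast z j, mul_left_comm, ← zpow_add₀ hz]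
    have h2 : (s : ℤ) + ((j : ℤ) - s) = (j : ℤ) := by omega
    rw [h2]

lemma mpoly_eval (s : ℕ) (hs : 1 ≤ s) (c : ℤ → ℂ)
    (hsupp : ∀ k : ℤ, (k < -((s : ℤ) - 1) ∨ (s : ℤ) - 1 < k) → c k = 0)
    {z : ℂ} (hz : z ≠ 0) :
    z * (mpoly s c).eval z = z ^ s * lEval s c z := by
  have h1 : lEval s c z = ∑ k ∈ Finset.Icc (-(s : ℤ) + 1) ((s : ℤ) - 1), c k * z ^ k := by
    rw [lEval]
    refine (Finset.sum_subset (Finset.Icc_subset_Icc (by omega) (by omega)) ?_).symm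
    intro k hk hnk
    simp only [Finset.mem_Icc] at hk hnk
    rw [hsupp k (by omega), zero_mul]
  rw [h1, mpoly, Polynomial.eval_finset_sum, Finset.mul_sum, Finset.mul_sum]
  simp only [Polynomial.eval_mul, Polynomial.eval_C, Polynomial.eval_pow, Polynomial.eval_X]
  refine Finset.sum_nbij' (fun j => (j : ℤ) + 1 - s) (fun k => (k + s - 1).toNat) ?_ ?_ ?_ ?_ ?_
  · intro j hj
    have := Finset.mem_range.mp hj
    simp only [Finset.mem_Icc]; omega
  · intro k hk
    simp only [Finset.mem_Icc] at hk
    simp only [Finset.mem_range]; omega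
  · intro j hj; have := Finset.mem_range.mp hj; omega
  · intro k hk; simp only [Finset.mem_Icc] at hk; omega
  · intro j hj
    rw [← zpow_natCast z s, ← zpow_natCast z j]
    have h2 : (s : ℤ) + ((j : ℤ) + 1 - s) = (j : ℤ) + 1 := by omega
    have h3 : z ^ (s : ℤ) * z ^ ((j : ℤ) + 1 - (s : ℤ)) = z * z ^ (j : ℤ) := by
      rw [← zpow_add₀ hz, h2, add_comm, zpow_add₀ hz, zpow_one]
    linear_combination (c ((j : ℤ) + 1 - s)) * h3.symm

lemma lEval_self_conj (d : ℕ) (c : ℤ → ℂ) (hc : ∀ k, c (-k) = (starRingEnd ℂ) (c k))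
    {z : ℂ} (hz : ‖z‖ = 1) :
    (starRingEnd ℂ) (lEval d c z) = lEval d c z := by
  have hz0 : z ≠ 0 := ne_zero_of_abs_one hz
  have hzc : (starRingEnd ℂ) z = z⁻¹ := conj_of_abs_one hz
  rw [lEval, map_sum]
  refine Finset.sum_nbij' (fun k => -k) (fun k => -k) ?_ ?_ ?_ ?_ ?_
  · intro k hk; simp only [Finset.mem_Icc] at *; omega
  · intro k hk; simp only [Finset.mem_Icc] at *; omega
  · intro k _; ring
  · intro k _; ring
  · intro k _
    rw [map_mul, ← hc, map_zpow₀, hzc, inv_zpow, ← zpow_neg]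

/-- The numerator polynomial `z^{s-1}·M⁺(z)` -/
noncomputable def NpP (s n : ℕ) (θ g : Fin s → ℂ) (q q' : ℂ) : Polynomial ℂ :=
  uHat s n θ g * flipC (s - 1) (uHat s n θ g)
    + uTilde s θ g * flipC (s - 1) (uTilde s θ g)
    + Polynomial.C q * (uHat s n θ g * flipC (s - 1) (uTilde s θ g))
    + Polynomial.C q' * (uTilde s θ g * flipC (s - 1) (uHat s n θ g))

lemma NpP_natDegree_le (s n : ℕ) (θ g : Fin s → ℂ) (q q' : ℂ) :
    (NpP s n θ g q q').natDegree ≤ 2 * s - 2 := by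
  have hA := natDegree_uHat_le s n θ g
  have hB := natDegree_uTilde_le s θ g
  have hA' := flipC_natDegree_le (s - 1) (uHat s n θ g)
  have hB' := flipC_natDegree_le (s - 1) (uTilde s θ g)
  have k1 : (uHat s n θ g * flipC (s - 1) (uHat s n θ g)).natDegree ≤ 2 * s - 2 :=
    Polynomial.natDegree_mul_le.trans (by omega)
  have k2 : (uTilde s θ g * flipC (s - 1) (uTilde s θ g)).natDegree ≤ 2 * s - 2 :=
    Polynomial.natDegree_mul_le.trans (by omega)
  have k3 : (Polynomial.C q * (uHat s n θ g * flipC (s - 1) (uTilde s θ g))).natDegree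
      ≤ 2 * s - 2 := (Polynomial.natDegree_C_mul_le _ _).trans
    (Polynomial.natDegree_mul_le.trans (by omega))
  have k4 : (Polynomial.C q' * (uTilde s θ g * flipC (s - 1) (uHat s n θ g))).natDegree
      ≤ 2 * s - 2 := (Polynomial.natDegree_C_mul_le _ _).trans
    (Polynomial.natDegree_mul_le.trans (by omega))
  refine (Polynomial.natDegree_add_le _ _).trans (max_le ?_ k4)
  refine (Polynomial.natDegree_add_le _ _).trans (max_le ?_ k3)
  exact (Polynomial.natDegree_add_le _ _).trans (max_le k1 k2)

lemma NpP_eval (s n : ℕ) (θ g : Fin s → ℂ) (q q' : ℂ) {w : ℂ} (hw : ‖w‖ = 1) :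
    (NpP s n θ g q q').eval w = w ^ (s - 1) *
      (((uHat s n θ g).eval w * (starRingEnd ℂ) ((uHat s n θ g).eval w)
          + (uTilde s θ g).eval w * (starRingEnd ℂ) ((uTilde s θ g).eval w))
        + q * ((uHat s n θ g).eval w * (starRingEnd ℂ) ((uTilde s θ g).eval w))
        + q' * (starRingEnd ℂ)
            ((uHat s n θ g).eval w * (starRingEnd ℂ) ((uTilde s θ g).eval w))) := by
  rw [NpP]
  simp only [Polynomial.eval_add, Polynomial.eval_mul, Polynomial.eval_C,
    flipC_eval (natDegree_uHat_le s n θ g) hw, flipC_eval (natDegree_uTilde_le s θ g) hw,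
    map_mul, starRingEnd_self_apply]
  ring

/-- Theorem `thm:dft_msrmt_support`: with `4s−1` pairwise distinct
shifted-harmonic samples on `𝕋`, any Hermitian Laurent polynomials `L̂` (degrees `−s..s`)
and `M` (degrees `−(s−1)..(s−1)`) satisfying `y_j·L̂(z_j) − M(z_j) = 0` must satisfy
`L̂ = c·L̂⁺` and `M = c·M⁺` identically for a real scalar `c`, where
`M⁺ = L⁺ + e^{iγ}·L̃⁺ + e^{−iγ}·(L̃⁺)*`. -/
theorem phaseless_support_recovery (s n : ℕ) (hs : 1 ≤ s) (hn : 4 * s - 1 ≤ n) (γ : ℝ)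
    (gp θp : Fin s → ℂ)
    (hgp : ∀ l, gp l ≠ 0)
    (hθT : ∀ l, ‖θp l‖ = 1) (hθinj : Function.Injective θp)
    (hθn : ∀ k, θp k ^ n ≠ Complex.exp (-(γ : ℂ) * Complex.I))
    (z : Fin (4 * s - 1) → ℂ) (hzinj : Function.Injective z)
    (hzT : ∀ j, ‖z j‖ = 1)
    (hzn : ∀ j, z j ^ n = Complex.exp ((γ : ℂ) * Complex.I))
    (y : Fin (4 * s - 1) → ℝ)
    (hy : ∀ j, y j = Complex.normSq
      ((uPoly s n θp gp).eval (z j) / (vPoly s θp).eval (z j)))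
    (lh m : ℤ → ℂ)
    (hlhsupp : ∀ k : ℤ, (k < -(s : ℤ) ∨ (s : ℤ) < k) → lh k = 0)
    (hmsupp : ∀ k : ℤ, (k < -((s : ℤ) - 1) ∨ (s : ℤ) - 1 < k) → m k = 0)
    (hlhherm : ∀ k : ℤ, lh (-k) = (starRingEnd ℂ) (lh k))
    (hmherm : ∀ k : ℤ, m (-k) = (starRingEnd ℂ) (m k))
    (heq : ∀ j, (y j : ℂ) * lEval s lh (z j) - lEval s m (z j) = 0) :
    ∃ c : ℝ, ∀ w : ℂ, ‖w‖ = 1 →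
      lEval s lh w =
        (c : ℂ) * ((vPoly s θp).eval w * (starRingEnd ℂ) ((vPoly s θp).eval w)) ∧
      lEval s m w =
        (c : ℂ) *
          (((uHat s n θp gp).eval w * (starRingEnd ℂ) ((uHat s n θp gp).eval w)
              + (uTilde s θp gp).eval w * (starRingEnd ℂ) ((uTilde s θp gp).eval w))
            + Complex.exp ((γ : ℂ) * Complex.I) *
                ((uHat s n θp gp).eval w * (starRingEnd ℂ) ((uTilde s θp gp).eval w))
            + Complex.exp (-(γ : ℂ) * Complex.I) *
                (starRingEnd ℂ)
                  ((uHat s n θp gp).eval w * (starRingEnd ℂ) ((uTilde s θp gp).eval w))) := by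
  classical
  set q : ℂ := Complex.exp ((γ : ℂ) * Complex.I) with hq_def
  set q' : ℂ := Complex.exp (-(γ : ℂ) * Complex.I) with hq'_def
  have hqq : q * q' = 1 := by
    rw [hq_def, hq'_def, ← Complex.exp_add]
    have h0 : (γ : ℂ) * Complex.I + -(γ : ℂ) * Complex.I = 0 := by ring
    rw [h0, Complex.exp_zero]
  have hqabs : ‖q‖ = 1 := by rw [hq_def]; exact Complex.norm_exp_ofReal_mul_I γ
  have hconjq : (starRingEnd ℂ) q = q' := by
    rw [hq_def, hq'_def, ← Complex.exp_conj, map_mul, Complex.conj_ofReal, Complex.conj_I]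
    ring_nf
  have hθ0 : ∀ l, θp l ≠ 0 := fun l => ne_zero_of_abs_one (hθT l)
  have hz0 : ∀ j, z j ≠ 0 := fun j => ne_zero_of_abs_one (hzT j)
  have hVeval : ∀ w : ℂ, (vPoly s θp).eval w = ∏ l, (θp l * w - 1) := by
    intro w; rw [vPoly, Polynomial.eval_prod]
    exact Finset.prod_congr rfl fun l _ => by simp
  -- `v` does not vanish at the sample points
  have hVzj : ∀ j, (vPoly s θp).eval (z j) ≠ 0 := by
    intro j
    rw [hVeval]
    refine Finset.prod_ne_zero_iff.mpr fun l _ => sub_ne_zero.mpr fun h1 => ?_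
    have h2 : θp l ^ n * z j ^ n = 1 := by rw [← mul_pow, h1, one_pow]
    rw [hzn j] at h2
    refine hθn l ?_
    have h3 : θp l ^ n = (Complex.exp ((γ : ℂ) * Complex.I))⁻¹ :=
      eq_inv_of_mul_eq_one_left h2
    rw [h3, ← Complex.exp_neg]
    congr 1; ring
  -- per-sample vanishing of the key polynomial
  have hkey_eval : ∀ j, (NpP s n θp gp q q' * lpoly s lh
      - vPoly s θp * flipC s (vPoly s θp) * mpoly s m).eval (z j) = 0 := by
    intro j
    have hw1 : ‖z j‖ = 1 := hzT j
    have hw0 : z j ≠ 0 := hz0 j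
    have hNp := NpP_eval s n θp gp q q' hw1
    have hVcE : (flipC s (vPoly s θp)).eval (z j)
        = (z j) ^ s * (starRingEnd ℂ) ((vPoly s θp).eval (z j)) :=
      flipC_eval (natDegree_vPoly_le s θp) hw1
    have hLh : (lpoly s lh).eval (z j) = (z j) ^ s * lEval s lh (z j) := lpoly_eval s lh hw0
    have hMm : (z j) * (mpoly s m).eval (z j) = (z j) ^ s * lEval s m (z j) :=
      mpoly_eval s hs m hmsupp hw0
    have hmeq : lEval s m (z j) = (y j : ℂ) * lEval s lh (z j) := (sub_eq_zero.mp (heq j)).symm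
    -- the measurement identity
    have hE : ((y j : ℝ) : ℂ) * ((vPoly s θp).eval (z j)
        * (starRingEnd ℂ) ((vPoly s θp).eval (z j)))
        = ((uHat s n θp gp).eval (z j) * (starRingEnd ℂ) ((uHat s n θp gp).eval (z j))
            + (uTilde s θp gp).eval (z j) * (starRingEnd ℂ) ((uTilde s θp gp).eval (z j)))
          + q * ((uHat s n θp gp).eval (z j) * (starRingEnd ℂ) ((uTilde s θp gp).eval (z j)))
          + q' * (starRingEnd ℂ) ((uHat s n θp gp).eval (z j)
              * (starRingEnd ℂ) ((uTilde s θp gp).eval (z j))) := by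
      have hvns : Complex.normSq ((vPoly s θp).eval (z j)) ≠ 0 := by
        simpa [Complex.normSq_eq_zero] using hVzj j
      have h1 : (y j : ℝ) * Complex.normSq ((vPoly s θp).eval (z j))
          = Complex.normSq ((uPoly s n θp gp).eval (z j)) := by
        rw [hy j, Complex.normSq_div, div_mul_cancel₀ _ hvns]
      have h2 : ((y j : ℝ) : ℂ) * ((vPoly s θp).eval (z j)
          * (starRingEnd ℂ) ((vPoly s θp).eval (z j)))
          = (uPoly s n θp gp).eval (z j)
            * (starRingEnd ℂ) ((uPoly s n θp gp).eval (z j)) := by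
        rw [Complex.mul_conj, Complex.mul_conj, ← Complex.ofReal_mul, h1]
      have hu : (uPoly s n θp gp).eval (z j)
          = q * (uHat s n θp gp).eval (z j) + (uTilde s θp gp).eval (z j) := by
        rw [uPoly, Polynomial.eval_add, Polynomial.eval_mul, Polynomial.eval_pow,
          Polynomial.eval_X, hzn j, hq_def]
      rw [hu] at h2
      refine h2.trans ?_
      simp only [map_add, map_mul, starRingEnd_self_apply, hconjq]
      linear_combination ((uHat s n θp gp).eval (z j)
        * (starRingEnd ℂ) ((uHat s n θp gp).eval (z j))) * hqq
    rw [Polynomial.eval_sub, Polynomial.eval_mul, Polynomial.eval_mul, Polynomial.eval_mul]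
    refine sub_eq_zero.mpr (mul_left_cancel₀ hw0 ?_)
    have hws : z j * (z j) ^ (s - 1) = (z j) ^ s := by
      conv_rhs => rw [show s = (s - 1) + 1 by omega]
      rw [pow_succ]; ring
    calc z j * ((NpP s n θp gp q q').eval (z j) * (lpoly s lh).eval (z j))
        = (z j * (z j) ^ (s - 1))
            * (((uHat s n θp gp).eval (z j) * (starRingEnd ℂ) ((uHat s n θp gp).eval (z j))
                + (uTilde s θp gp).eval (z j) * (starRingEnd ℂ) ((uTilde s θp gp).eval (z j)))
              + q * ((uHat s n θp gp).eval (z j)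
                  * (starRingEnd ℂ) ((uTilde s θp gp).eval (z j)))
              + q' * (starRingEnd ℂ) ((uHat s n θp gp).eval (z j)
                  * (starRingEnd ℂ) ((uTilde s θp gp).eval (z j))))
            * ((z j) ^ s * lEval s lh (z j)) := by rw [hNp, hLh]; ring
      _ = (z j) ^ s * (((y j : ℝ) : ℂ) * ((vPoly s θp).eval (z j)
            * (starRingEnd ℂ) ((vPoly s θp).eval (z j))))
            * ((z j) ^ s * lEval s lh (z j)) := by rw [hws, hE]
      _ = (vPoly s θp).eval (z j) * ((z j) ^ s * (starRingEnd ℂ) ((vPoly s θp).eval (z j)))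
            * ((z j) ^ s * (((y j : ℝ) : ℂ) * lEval s lh (z j))) := by ring
      _ = (vPoly s θp).eval (z j) * ((z j) ^ s * (starRingEnd ℂ) ((vPoly s θp).eval (z j)))
            * ((z j) ^ s * lEval s m (z j)) := by rw [hmeq]
      _ = (vPoly s θp).eval (z j) * ((z j) ^ s * (starRingEnd ℂ) ((vPoly s θp).eval (z j)))
            * (z j * (mpoly s m).eval (z j)) := by rw [hMm]
      _ = z j * ((vPoly s θp).eval (z j) * (flipC s (vPoly s θp)).eval (z j)
            * (mpoly s m).eval (z j)) := by rw [hVcE]; ring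
  -- the key polynomial identity
  have hG : NpP s n θp gp q q' * lpoly s lh
      - vPoly s θp * flipC s (vPoly s θp) * mpoly s m = 0 := by
    refine Polynomial.eq_zero_of_natDegree_lt_card_of_eval_eq_zero _ hzinj hkey_eval ?_
    rw [Fintype.card_fin]
    have b1 := NpP_natDegree_le s n θp gp q q'
    have b2 := natDegree_lpoly_le s lh
    have b3 := natDegree_vPoly_le s θp
    have b4 := flipC_natDegree_le s (vPoly s θp)
    have b5 := natDegree_mpoly_le s m
    have d1 : (NpP s n θp gp q q' * lpoly s lh).natDegree ≤ 4 * s - 2 :=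
      Polynomial.natDegree_mul_le.trans (by omega)
    have d2 : (vPoly s θp * flipC s (vPoly s θp) * mpoly s m).natDegree ≤ 4 * s - 2 := by
      refine Polynomial.natDegree_mul_le.trans ?_
      have d3 : (vPoly s θp * flipC s (vPoly s θp)).natDegree ≤ 2 * s :=
        Polynomial.natDegree_mul_le.trans (by omega)
      omega
    have := Polynomial.natDegree_sub_le (NpP s n θp gp q q' * lpoly s lh)
      (vPoly s θp * flipC s (vPoly s θp) * mpoly s m)
    omega
  have hkey : NpP s n θp gp q q' * lpoly s lh
      = vPoly s θp * flipC s (vPoly s θp) * mpoly s m := sub_eq_zero.mp hG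
  -- conjugate root data
  have hbabs : ∀ l, ‖(starRingEnd ℂ) (θp l)‖ = 1 := by
    intro l; rw [Complex.norm_conj]; exact hθT l
  have hbinj : Function.Injective (fun l => (starRingEnd ℂ) (θp l)) := by
    intro a c h
    exact hθinj (by simpa [starRingEnd_self_apply] using congrArg (starRingEnd ℂ) h)
  have hθb : ∀ l, θp l * (starRingEnd ℂ) (θp l) = 1 := fun l => mul_conj_of_abs_one (hθT l)
  have hVb : ∀ l, (vPoly s θp).eval ((starRingEnd ℂ) (θp l)) = 0 := by
    intro l
    rw [hVeval]
    exact Finset.prod_eq_zero (Finset.mem_univ l) (by rw [hθb l]; ring)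
  have hVcb : ∀ l, (flipC s (vPoly s θp)).eval ((starRingEnd ℂ) (θp l)) = 0 := by
    intro l
    rw [flipC_eval (natDegree_vPoly_le s θp) (hbabs l), hVb l, map_zero, mul_zero]
  -- tPoly evaluations at the conjugate nodes
  have htpe : ∀ i l : Fin s, i ≠ l → (tPoly s θp i).eval ((starRingEnd ℂ) (θp l)) = 0 := by
    intro i l hil
    rw [tPoly, Polynomial.eval_prod]
    refine Finset.prod_eq_zero (Finset.mem_erase.mpr ⟨Ne.symm hil, Finset.mem_univ l⟩) ?_
    simp only [Polynomial.eval_sub, Polynomial.eval_mul, Polynomial.eval_C, Polynomial.eval_X,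
      Polynomial.eval_one]
    rw [hθb l]; ring
  have htl : ∀ l, (tPoly s θp l).eval ((starRingEnd ℂ) (θp l)) ≠ 0 := by
    intro l
    rw [tPoly, Polynomial.eval_prod]
    refine Finset.prod_ne_zero_iff.mpr fun i hi => ?_
    simp only [Polynomial.eval_sub, Polynomial.eval_mul, Polynomial.eval_C, Polynomial.eval_X,
      Polynomial.eval_one]
    refine sub_ne_zero.mpr fun h1 => ?_
    have hbl0 : (starRingEnd ℂ) (θp l) ≠ 0 := ne_zero_of_abs_one (hbabs l)
    have h2 : θp i = θp l := mul_right_cancel₀ hbl0 (h1.trans (hθb l).symm)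
    exact (Finset.mem_erase.mp hi).1 (hθinj h2)
  have hAb : ∀ l, (uHat s n θp gp).eval ((starRingEnd ℂ) (θp l))
      = θp l ^ n * (gp l * (tPoly s θp l).eval ((starRingEnd ℂ) (θp l))) := by
    intro l
    rw [uHat, Polynomial.eval_finset_sum]
    rw [Finset.sum_eq_single l]
    · rw [Polynomial.eval_mul, Polynomial.eval_C]; ring
    · intro i _ hil; rw [Polynomial.eval_mul, htpe i l hil, mul_zero]
    · intro h; exact absurd (Finset.mem_univ l) h
  have hBb : ∀ l, (uTilde s θp gp).eval ((starRingEnd ℂ) (θp l))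
      = -(gp l * (tPoly s θp l).eval ((starRingEnd ℂ) (θp l))) := by
    intro l
    rw [uTilde, Polynomial.eval_neg, Polynomial.eval_finset_sum]
    rw [Finset.sum_eq_single l]
    · rw [Polynomial.eval_mul, Polynomial.eval_C]
    · intro i _ hil; rw [Polynomial.eval_mul, htpe i l hil, mul_zero]
    · intro h; exact absurd (Finset.mem_univ l) h
  -- Np does not vanish at the conjugate nodes
  have hNpb : ∀ l, (NpP s n θp gp q q').eval ((starRingEnd ℂ) (θp l)) ≠ 0 := by
    intro l
    rw [NpP_eval s n θp gp q q' (hbabs l)]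
    refine mul_ne_zero (pow_ne_zero _ (ne_zero_of_abs_one (hbabs l))) ?_
    set a : ℂ := gp l * (tPoly s θp l).eval ((starRingEnd ℂ) (θp l)) with ha_def
    have ha0 : a ≠ 0 := mul_ne_zero (hgp l) (htl l)
    have hτabs : ‖θp l ^ n‖ = 1 := by rw [norm_pow, hθT l, one_pow]
    have hτ : θp l ^ n * (starRingEnd ℂ) (θp l ^ n) = 1 := mul_conj_of_abs_one hτabs
    have hA' := hAb l
    have hB' := hBb l
    rw [hA', hB']
    set τ : ℂ := θp l ^ n with hτ_def
    set r : ℂ := q * τ with hr_def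
    have hrc : r * (starRingEnd ℂ) r = 1 := by
      rw [hr_def, map_mul, hconjq]
      calc q * τ * (q' * (starRingEnd ℂ) τ) = (q * q') * (τ * (starRingEnd ℂ) τ) := by ring
        _ = 1 := by rw [hqq, hτ, one_mul]
    have hr1 : r ≠ 1 := by
      intro h
      refine hθn l ?_
      have h2 : τ * q = 1 := by rw [mul_comm]; exact hr_def ▸ h
      have h3 : τ = q⁻¹ := eq_inv_of_mul_eq_one_left h2
      rw [hτ_def] at h3
      rw [h3, hq_def, ← Complex.exp_neg]
      congr 1; ring
    have hexpr : ((τ * a) * (starRingEnd ℂ) (τ * a) + (-a) * (starRingEnd ℂ) (-a))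
        + q * ((τ * a) * (starRingEnd ℂ) (-a))
        + q' * (starRingEnd ℂ) ((τ * a) * (starRingEnd ℂ) (-a))
        = a * (starRingEnd ℂ) a * (2 - r - (starRingEnd ℂ) r) := by
      simp only [map_mul, map_neg, starRingEnd_self_apply, hr_def, ← hconjq]
      linear_combination (a * (starRingEnd ℂ) a) * hτ
    rw [hexpr]
    refine mul_ne_zero (mul_ne_zero ha0 fun hc => ha0 ?_) fun h0 => ?_
    · simpa [starRingEnd_self_apply] using congrArg (starRingEnd ℂ) hc
    · have hsq : (r - 1) ^ 2 = 0 := by linear_combination (-r) * h0 - hrc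
      exact hr1 (sub_eq_zero.mp (pow_eq_zero_iff two_ne_zero |>.mp hsq))
  -- divisibility by the double conjugate-node factors
  have hpair := Polynomial.pairwise_coprime_X_sub_C hbinj
  have hdvdLh : (∏ l : Fin s, (Polynomial.X - Polynomial.C ((starRingEnd ℂ) (θp l)))) ^ 2
      ∣ lpoly s lh := by
    rw [← Finset.prod_pow]
    refine Finset.prod_dvd_of_coprime (fun i _ j _ hij => (hpair hij).pow) fun l _ => ?_
    have h1 : (Polynomial.X - Polynomial.C ((starRingEnd ℂ) (θp l))) ^ 2
        ∣ NpP s n θp gp q q' * lpoly s lh := by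
      rw [hkey]
      have h2 : (Polynomial.X - Polynomial.C ((starRingEnd ℂ) (θp l)))
          * (Polynomial.X - Polynomial.C ((starRingEnd ℂ) (θp l)))
          ∣ vPoly s θp * flipC s (vPoly s θp) :=
        mul_dvd_mul (Polynomial.dvd_iff_isRoot.mpr (hVb l))
          (Polynomial.dvd_iff_isRoot.mpr (hVcb l))
      rw [← sq] at h2
      exact dvd_mul_of_dvd_left h2 _
    have hcop : IsCoprime ((Polynomial.X - Polynomial.C ((starRingEnd ℂ) (θp l))) ^ 2)
        (NpP s n θp gp q q') :=
      ((Polynomial.irreducible_X_sub_C _).coprime_iff_not_dvd.mpr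
        (fun hd => hNpb l (Polynomial.dvd_iff_isRoot.mp hd))).pow_left
    exact hcop.dvd_of_dvd_mul_left h1
  have hPv_monic : (∏ l : Fin s,
      (Polynomial.X - Polynomial.C ((starRingEnd ℂ) (θp l)))).Monic :=
    Polynomial.monic_prod_of_monic _ _ fun l _ => Polynomial.monic_X_sub_C _
  have hPv_deg : (∏ l : Fin s,
      (Polynomial.X - Polynomial.C ((starRingEnd ℂ) (θp l)))).natDegree = s := by
    rw [Polynomial.natDegree_prod _ _ fun l _ => Polynomial.X_sub_C_ne_zero _]
    simp [Polynomial.natDegree_X_sub_C]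
  obtain ⟨r, hLh_eq⟩ := eq_C_mul_of_dvd (hPv_monic.pow 2) hdvdLh
    (by rw [Polynomial.natDegree_pow, hPv_deg]; exact natDegree_lpoly_le s lh)
  have hVfac := vPoly_eq s θp hθT
  have hcV0 : (∏ l, θp l) ≠ 0 := Finset.prod_ne_zero_iff.mpr fun l _ => hθ0 l
  have hdvdVc : (∏ l : Fin s, (Polynomial.X - Polynomial.C ((starRingEnd ℂ) (θp l))))
      ∣ flipC s (vPoly s θp) :=
    Finset.prod_dvd_of_coprime (fun i _ j _ hij => hpair hij) fun l _ =>
      Polynomial.dvd_iff_isRoot.mpr (hVcb l)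
  obtain ⟨e, hVc_eq⟩ := eq_C_mul_of_dvd hPv_monic hdvdVc
    (by rw [hPv_deg]; exact flipC_natDegree_le s _)
  have hj0 : 0 < 4 * s - 1 := by omega
  have hconjV0 : (starRingEnd ℂ) ((vPoly s θp).eval (z ⟨0, hj0⟩)) ≠ 0 := fun hc =>
    hVzj ⟨0, hj0⟩ (by simpa [starRingEnd_self_apply] using congrArg (starRingEnd ℂ) hc)
  have hVc0 : flipC s (vPoly s θp) ≠ 0 := by
    intro h
    have h2 := flipC_eval (natDegree_vPoly_le s θp) (hzT ⟨0, hj0⟩)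
    rw [h] at h2
    exact (mul_ne_zero (pow_ne_zero s (hz0 ⟨0, hj0⟩)) hconjV0) (by simpa using h2.symm)
  have he0 : e ≠ 0 := fun h => hVc0 (by rw [hVc_eq, h, map_zero, zero_mul])
  have hce0 : (∏ l, θp l) * e ≠ 0 := mul_ne_zero hcV0 he0
  obtain ⟨c', hrc'⟩ : ∃ c' : ℂ, r = c' * ((∏ l, θp l) * e) :=
    ⟨r / ((∏ l, θp l) * e), by field_simp⟩
  have hPv2ne : (∏ l : Fin s,
      (Polynomial.X - Polynomial.C ((starRingEnd ℂ) (θp l)))) ^ 2 ≠ 0 :=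
    pow_ne_zero _ hPv_monic.ne_zero
  have h4 : NpP s n θp gp q q' * Polynomial.C r
      = Polynomial.C ((∏ l, θp l) * e) * mpoly s m := by
    refine mul_right_cancel₀ hPv2ne ?_
    calc NpP s n θp gp q q' * Polynomial.C r
          * (∏ l : Fin s, (Polynomial.X - Polynomial.C ((starRingEnd ℂ) (θp l)))) ^ 2
        = NpP s n θp gp q q' * (Polynomial.C r
            * (∏ l : Fin s, (Polynomial.X - Polynomial.C ((starRingEnd ℂ) (θp l)))) ^ 2) := by
          ring
      _ = NpP s n θp gp q q' * lpoly s lh := by rw [← hLh_eq]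
      _ = vPoly s θp * flipC s (vPoly s θp) * mpoly s m := hkey
      _ = Polynomial.C ((∏ l, θp l) * e) * mpoly s m
            * (∏ l : Fin s, (Polynomial.X - Polynomial.C ((starRingEnd ℂ) (θp l)))) ^ 2 := by
          rw [hVc_eq, hVfac, map_mul]; ring
  have hCne : (Polynomial.C ((∏ l, θp l) * e) : Polynomial ℂ) ≠ 0 :=
    Polynomial.C_ne_zero.mpr hce0
  have hMm_eq : mpoly s m = Polynomial.C c' * NpP s n θp gp q q' := by
    refine (mul_right_cancel₀ hCne ?_).symm
    calc Polynomial.C c' * NpP s n θp gp q q' * Polynomial.C ((∏ l, θp l) * e)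
        = NpP s n θp gp q q' * Polynomial.C (c' * ((∏ l, θp l) * e)) := by
          simp only [Polynomial.C_mul]; ring
      _ = NpP s n θp gp q q' * Polynomial.C r := by rw [← hrc']
      _ = mpoly s m * Polynomial.C ((∏ l, θp l) * e) := by rw [h4]; ring
  have hLh_eq2 : lpoly s lh
      = Polynomial.C c' * (vPoly s θp * flipC s (vPoly s θp)) := by
    rw [hVc_eq, hVfac, hLh_eq, hrc']
    simp only [Polynomial.C_mul]; ring
  -- pointwise conclusions with constant `c'`
  have hmain1 : ∀ w : ℂ, ‖w‖ = 1 →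
      lEval s lh w = c' * ((vPoly s θp).eval w
        * (starRingEnd ℂ) ((vPoly s θp).eval w)) := by
    intro w hw
    have hw0 : w ≠ 0 := ne_zero_of_abs_one hw
    refine mul_left_cancel₀ (pow_ne_zero s hw0) ?_
    rw [← lpoly_eval s lh hw0, hLh_eq2, Polynomial.eval_mul, Polynomial.eval_C,
      Polynomial.eval_mul, flipC_eval (natDegree_vPoly_le s θp) hw]
    ring
  have hmain2 : ∀ w : ℂ, ‖w‖ = 1 →
      lEval s m w = c' *
        (((uHat s n θp gp).eval w * (starRingEnd ℂ) ((uHat s n θp gp).eval w)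
            + (uTilde s θp gp).eval w * (starRingEnd ℂ) ((uTilde s θp gp).eval w))
          + q * ((uHat s n θp gp).eval w * (starRingEnd ℂ) ((uTilde s θp gp).eval w))
          + q' * (starRingEnd ℂ)
              ((uHat s n θp gp).eval w * (starRingEnd ℂ) ((uTilde s θp gp).eval w))) := by
    intro w hw
    have hw0 : w ≠ 0 := ne_zero_of_abs_one hw
    refine mul_left_cancel₀ (pow_ne_zero s hw0) ?_
    rw [← mpoly_eval s hs m hmsupp hw0, hMm_eq, Polynomial.eval_mul, Polynomial.eval_C,
      NpP_eval s n θp gp q q' hw]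
    have hws : w * w ^ (s - 1) = w ^ s := by
      conv_rhs => rw [show s = (s - 1) + 1 by omega]
      rw [pow_succ]; ring
    calc w * (c' * (w ^ (s - 1) *
          (((uHat s n θp gp).eval w * (starRingEnd ℂ) ((uHat s n θp gp).eval w)
              + (uTilde s θp gp).eval w * (starRingEnd ℂ) ((uTilde s θp gp).eval w))
            + q * ((uHat s n θp gp).eval w * (starRingEnd ℂ) ((uTilde s θp gp).eval w))
            + q' * (starRingEnd ℂ)
                ((uHat s n θp gp).eval w * (starRingEnd ℂ) ((uTilde s θp gp).eval w)))))
        = (w * w ^ (s - 1)) * (c' *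
            (((uHat s n θp gp).eval w * (starRingEnd ℂ) ((uHat s n θp gp).eval w)
                + (uTilde s θp gp).eval w * (starRingEnd ℂ) ((uTilde s θp gp).eval w))
              + q * ((uHat s n θp gp).eval w * (starRingEnd ℂ) ((uTilde s θp gp).eval w))
              + q' * (starRingEnd ℂ)
                  ((uHat s n θp gp).eval w
                    * (starRingEnd ℂ) ((uTilde s θp gp).eval w)))) := by ring
      _ = w ^ s * (c' *
            (((uHat s n θp gp).eval w * (starRingEnd ℂ) ((uHat s n θp gp).eval w)
                + (uTilde s θp gp).eval w * (starRingEnd ℂ) ((uTilde s θp gp).eval w))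
              + q * ((uHat s n θp gp).eval w * (starRingEnd ℂ) ((uTilde s θp gp).eval w))
              + q' * (starRingEnd ℂ)
                  ((uHat s n θp gp).eval w
                    * (starRingEnd ℂ) ((uTilde s θp gp).eval w)))) := by rw [hws]
  -- `c'` is real
  have h1 := hmain1 (z ⟨0, hj0⟩) (hzT ⟨0, hj0⟩)
  have h2 := lEval_self_conj s lh hlhherm (hzT ⟨0, hj0⟩)
  rw [Complex.mul_conj] at h1
  rw [h1, map_mul, Complex.conj_ofReal] at h2
  have hns0 : ((Complex.normSq ((vPoly s θp).eval (z ⟨0, hj0⟩)) : ℝ) : ℂ) ≠ 0 := by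
    simpa [Complex.ofReal_eq_zero, Complex.normSq_eq_zero] using hVzj ⟨0, hj0⟩
  have hcc : (starRingEnd ℂ) c' = c' := mul_right_cancel₀ hns0 h2
  have hre : ((c'.re : ℝ) : ℂ) = c' := Complex.conj_eq_iff_re.mp hcc
  refine ⟨c'.re, fun w hw => ⟨?_, ?_⟩⟩
  · rw [hre]; exact hmain1 w hw
  · rw [hre]; exact hmain2 w hw
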